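/- Let F: K → L be an exact functor of triangulated categories. (a) If F admits a right adjoint U: L → K, then U(L) is F-injective for every L ∈ L, the unit of adjunction η: X → UF(X) is an F-monomorphism for every X ∈ K, there are enough F-injectives, and the class of F-injectives equals add(U(L) | L ∈ L). (b) If F admits a left adjoint V: L → K, then V(L) is F-projective for every L ∈ L, the counit ε: VF(X) → X is an F-epimorphism for every X ∈ K, there are enough F-projectives, and the class of F-projectives equals add(V(L) | L ∈ L). -/

import Mathlib

/-!
Common definitions for formalizing "Relative stable categories and birationality"
(Balmer–Stevenson): proper classes of triangles in the sense of Beligiannis,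
relative projectives/injectives, Frobenius classes, and abstract models of the
relative stable category together with Beligiannis' triangulation.
-/

noncomputable section

open CategoryTheory Limits Pretriangulated ZeroObject

universe v u v' u' v'' u'' v₁ u₁ v₂ u₂

namespace RelStable

variable {K : Type u} [Category.{v} K] [Preadditive K] [HasZeroObject K]
  [HasShift K ℤ] [∀ n : ℤ, (CategoryTheory.shiftFunctor K n).Additive] [Pretriangulated K]

/-- `f` is an `E`-monomorphism: it occurs as the first map of a triangle in `E`. -/
def SMono (E : Set (Triangle K)) {X Y : K} (f : X ⟶ Y) : Prop :=
  ∃ (Z : K) (g : Y ⟶ Z) (h : Z ⟶ X⟦(1:ℤ)⟧), Triangle.mk f g h ∈ E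

/-- `g` is an `E`-epimorphism: it occurs as the second map of a triangle in `E`. -/
def SEpi (E : Set (Triangle K)) {Y Z : K} (g : Y ⟶ Z) : Prop :=
  ∃ (X : K) (f : X ⟶ Y) (h : Z ⟶ X⟦(1:ℤ)⟧), Triangle.mk f g h ∈ E

/-- `h` is an `E`-phantom: up to isomorphism of its target with a suspension, it
occurs as the third map of a triangle in `E`. -/
def SPhantom (E : Set (Triangle K)) {Z W : K} (h : Z ⟶ W) : Prop :=
  ∃ (X Y : K) (f : X ⟶ Y) (g : Y ⟶ Z) (h' : Z ⟶ X⟦(1:ℤ)⟧) (e : (X⟦(1:ℤ)⟧ : K) ≅ W),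
    Triangle.mk f g h' ∈ E ∧ h = h' ≫ e.hom

/-- `P` is `E`-projective: `Hom(P,-)` takes triangles in `E` to short exact sequences. -/
def EProjective (E : Set (Triangle K)) (P : K) : Prop :=
  ∀ T ∈ E,
    (∀ a : P ⟶ T.obj₁, a ≫ T.mor₁ = 0 → a = 0) ∧
    (∀ b : P ⟶ T.obj₂, b ≫ T.mor₂ = 0 → ∃ a : P ⟶ T.obj₁, a ≫ T.mor₁ = b) ∧
    (∀ c : P ⟶ T.obj₃, ∃ b : P ⟶ T.obj₂, b ≫ T.mor₂ = c)

/-- `I` is `E`-injective: `Hom(-,I)` takes triangles in `E` to short exact sequences. -/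
def EInjective (E : Set (Triangle K)) (I : K) : Prop :=
  ∀ T ∈ E,
    (∀ a : T.obj₃ ⟶ I, T.mor₂ ≫ a = 0 → a = 0) ∧
    (∀ b : T.obj₂ ⟶ I, T.mor₁ ≫ b = 0 → ∃ a : T.obj₃ ⟶ I, T.mor₂ ≫ a = b) ∧
    (∀ c : T.obj₁ ⟶ I, ∃ b : T.obj₂ ⟶ I, T.mor₁ ≫ b = c)

/-- `K` has enough `E`-projectives: every object admits an `E`-projective precover. -/
def EnoughProjectives (E : Set (Triangle K)) : Prop :=
  ∀ X : K, ∃ (P : K) (p : P ⟶ X), EProjective E P ∧ SEpi E p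

/-- `K` has enough `E`-injectives: every object admits an `E`-injective preenvelope. -/
def EnoughInjectives (E : Set (Triangle K)) : Prop :=
  ∀ X : K, ∃ (I : K) (i : X ⟶ I), EInjective E I ∧ SMono E i

/-- The direct sum of two triangles. -/
def sumTriangle [HasBinaryBiproducts K] (T₁ T₂ : Triangle K) : Triangle K :=
  Triangle.mk (biprod.map T₁.mor₁ T₂.mor₁) (biprod.map T₁.mor₂ T₂.mor₂)
    (biprod.desc (T₁.mor₃ ≫ (shiftFunctor K (1:ℤ)).map biprod.inl)
      (T₂.mor₃ ≫ (shiftFunctor K (1:ℤ)).map biprod.inr))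

/-- A proper class of triangles in the sense of Beligiannis: a class of distinguished
triangles closed under isomorphism, suspension, finite direct sums and retracts,
containing the trivial triangles, whose `E`-monomorphisms are closed under homotopy
pushout, whose `E`-epimorphisms are closed under homotopy pullback, and which is
saturated. -/
structure IsProperClass [HasBinaryBiproducts K] (E : Set (Triangle K)) : Prop where
  subset_dist : ∀ T ∈ E, T ∈ (distTriang K)
  iso_closed : ∀ (T₁ T₂ : Triangle K), (T₁ ≅ T₂) → T₁ ∈ E → T₂ ∈ E
  shift_closed : ∀ T ∈ E, (Triangle.shiftFunctor K (1 : ℤ)).obj T ∈ E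
  sum_closed : ∀ T₁ T₂ : Triangle K, T₁ ∈ E → T₂ ∈ E → sumTriangle T₁ T₂ ∈ E
  retract_closed : ∀ (T₁ T₂ : Triangle K) (i : T₁ ⟶ T₂) (r : T₂ ⟶ T₁),
    i ≫ r = 𝟙 T₁ → T₂ ∈ E → T₁ ∈ E
  contractible₁ : ∀ X : K, contractibleTriangle X ∈ E
  contractible₂ : ∀ Y : K,
    Triangle.mk (0 : (0 : K) ⟶ Y) (𝟙 Y) (0 : Y ⟶ ((0 : K)⟦(1:ℤ)⟧)) ∈ E
  mono_pushout : ∀ {X Y X' : K} (f : X ⟶ Y), SMono E f → ∀ (t : X ⟶ X')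
    (W : K) (u : Y ⊞ X' ⟶ W) (v : W ⟶ X⟦(1:ℤ)⟧),
    Triangle.mk (biprod.lift f t) u v ∈ (distTriang K) → SMono E (biprod.inr ≫ u)
  epi_pullback : ∀ {Y Z Z' : K} (g : Y ⟶ Z), SEpi E g → ∀ (t : Z' ⟶ Z)
    (W : K) (w : W ⟶ Y ⊞ Z') (v : Z ⟶ W⟦(1:ℤ)⟧),
    Triangle.mk w (biprod.desc g t) v ∈ (distTriang K) → SEpi E (w ≫ biprod.snd)
  saturated : ∀ {Y Z : K} (g : Y ⟶ Z), SEpi E g → ∀ {W : K} (k : Z ⟶ W),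
    SPhantom E (g ≫ k) → SPhantom E k

/-- A Frobenius class of triangles: enough projectives, enough injectives, and the
projectives coincide with the injectives. -/
structure IsFrobenius (E : Set (Triangle K)) : Prop where
  enough_proj : EnoughProjectives E
  enough_inj : EnoughInjectives E
  proj_eq_inj : ∀ X : K, EProjective E X ↔ EInjective E X

/-- A morphism factoring through an `E`-projective(-injective) object; these are the
morphisms killed by the quotient functor to the relative stable category. -/
def FactorsThroughProj (E : Set (Triangle K)) {X Y : K} (f : X ⟶ Y) : Prop :=
  ∃ (P : K) (a : X ⟶ P) (b : P ⟶ Y), EProjective E P ∧ a ≫ b = f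

/-- The image of a triangle under a functor equipped with a commutation with shift. -/
def mapTri {C : Type u'} {D : Type v'} [Category C] [Category D]
    [HasShift C ℤ] [HasShift D ℤ] (F : C ⥤ D) (hc : F.CommShift ℤ) (T : Triangle C) :
    Triangle D :=
  Triangle.mk (F.map T.mor₁) (F.map T.mor₂)
    (F.map T.mor₃ ≫ (Functor.CommShift.commShiftIso (self := hc) F (1:ℤ)).hom.app T.obj₁)

/-- An exact (triangulated) functor: additive, commutes with the shift, and sends
distinguished triangles to distinguished triangles. -/
def IsExactFunctor {C : Type u'} {D : Type v'} [Category C] [Category D]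
    [Preadditive C] [Preadditive D] [HasZeroObject C] [HasZeroObject D]
    [HasShift C ℤ] [HasShift D ℤ]
    [∀ n : ℤ, (shiftFunctor C n).Additive] [∀ n : ℤ, (shiftFunctor D n).Additive]
    [Pretriangulated C] [Pretriangulated D] (F : C ⥤ D) : Prop :=
  F.Additive ∧ ∃ hc : F.CommShift ℤ, ∀ T ∈ (distTriang C), mapTri F hc T ∈ (distTriang D)

/-- An abstract model of the relative stable category `S(K;E) = K/proj(E)` together
with Beligiannis' triangulation: a pretriangulated category `S` and an additive
quotient functor `π : K ⥤ S` killing exactly the maps factoring through `proj(E)`,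
such that the suspension of `S` is computed by cofibres of `inj(E)`-preenvelopes,
image-triangles of triangles of `E` are distinguished, and every distinguished
triangle of `S` is isomorphic to such an image-triangle. -/
structure StableModel (E : Set (Triangle K)) where
  S : Type u
  [cat : Category.{v} S]
  [preadd : Preadditive S]
  [zobj : HasZeroObject S]
  [hshift : HasShift S ℤ]
  [shiftAdd : ∀ n : ℤ, (shiftFunctor S n).Additive]
  [pretri : Pretriangulated S]
  π : K ⥤ S
  [πAdd : π.Additive]
  π_full : π.Full
  π_essSurj : π.EssSurj
  π_map_zero_iff : ∀ {X Y : K} (f : X ⟶ Y), π.map f = 0 ↔ FactorsThroughProj E f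
  susp : ∀ T ∈ E, EInjective E T.obj₂ →
    Nonempty (π.obj T.obj₃ ≅ (π.obj T.obj₁)⟦(1:ℤ)⟧)
  imageTriangle_distinguished : ∀ T ∈ E,
    ∃ h' : π.obj T.obj₃ ⟶ (π.obj T.obj₁)⟦(1:ℤ)⟧,
      Triangle.mk (π.map T.mor₁) (π.map T.mor₂) h' ∈ (distTriang S)
  distinguished_iso_image : ∀ T' ∈ (distTriang S), ∃ T ∈ E,
    ∃ h' : π.obj T.obj₃ ⟶ (π.obj T.obj₁)⟦(1:ℤ)⟧,
      Triangle.mk (π.map T.mor₁) (π.map T.mor₂) h' ∈ (distTriang S) ∧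
      Nonempty (T' ≅ Triangle.mk (π.map T.mor₁) (π.map T.mor₂) h')

attribute [instance] StableModel.cat StableModel.preadd StableModel.zobj
  StableModel.hshift StableModel.shiftAdd StableModel.pretri StableModel.πAdd


/-- A morphism factoring through an `E`-injective object. -/
def FactorsThroughInj (E : Set (Triangle K)) {X Y : K} (f : X ⟶ Y) : Prop :=
  ∃ (I : K) (a : X ⟶ I) (b : I ⟶ Y), EInjective E I ∧ a ≫ b = f

/-- The `F`-split triangles: distinguished triangles whose third map is killed by `F`. -/
def splitClass {C : Type u'} {D : Type v'} [Category C] [Category D] [Preadditive C]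
    [HasZeroObject C] [HasShift C ℤ] [∀ n : ℤ, (shiftFunctor C n).Additive]
    [Pretriangulated C] [Limits.HasZeroMorphisms D] (F : C ⥤ D) : Set (Triangle C) :=
  {T | T ∈ (distTriang C) ∧ F.map T.mor₃ = 0}

/-- The closure of a class of objects under finite direct sums and direct summands. -/
inductive AddClosure {C : Type u'} [Category.{v'} C] [Preadditive C] [HasZeroObject C]
    [HasBinaryBiproducts C] (A : Set C) : C → Prop
  | of (X : C) (hX : X ∈ A) : AddClosure A X
  | zero (X : C) (hX : IsZero X) : AddClosure A X
  | sum (X Y : C) (hX : AddClosure A X) (hY : AddClosure A Y) : AddClosure A (X ⊞ Y)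
  | summand (X Y Z : C) (hZ : AddClosure A Z) (e : (X ⊞ Y) ≅ Z) : AddClosure A X
  | isoClosed (X Y : C) (hX : AddClosure A X) (e : X ≅ Y) : AddClosure A Y


set_option linter.unusedSectionVars false

section Aux

variable {K₀ : Type u} [Category.{v} K₀] [Preadditive K₀] [HasZeroObject K₀]
  [HasShift K₀ ℤ] [∀ n : ℤ, (shiftFunctor K₀ n).Additive] [Pretriangulated K₀]

lemma einjective_of_retract (E : Set (Triangle K₀)) {X Z : K₀} (hZ : EInjective E Z)
    (i : X ⟶ Z) (r : Z ⟶ X) (hir : i ≫ r = 𝟙 X) : EInjective E X := by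
  intro T hT
  obtain ⟨h1, h2, h3⟩ := hZ T hT
  refine ⟨fun a ha => ?_, fun b hb => ?_, fun c => ?_⟩
  · have h0 := h1 (a ≫ i) (by rw [← Category.assoc, ha, zero_comp])
    calc a = a ≫ i ≫ r := by rw [hir, Category.comp_id]
    _ = 0 := by rw [← Category.assoc, h0, zero_comp]
  · obtain ⟨a, ha⟩ := h2 (b ≫ i) (by rw [← Category.assoc, hb, zero_comp])
    exact ⟨a ≫ r, by rw [← Category.assoc, ha, Category.assoc, hir, Category.comp_id]⟩
  · obtain ⟨b, hb⟩ := h3 (c ≫ i)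
    exact ⟨b ≫ r, by rw [← Category.assoc, hb, Category.assoc, hir, Category.comp_id]⟩

lemma eprojective_of_retract (E : Set (Triangle K₀)) {X Z : K₀} (hZ : EProjective E Z)
    (i : X ⟶ Z) (r : Z ⟶ X) (hir : i ≫ r = 𝟙 X) : EProjective E X := by
  intro T hT
  obtain ⟨h1, h2, h3⟩ := hZ T hT
  refine ⟨fun a ha => ?_, fun b hb => ?_, fun c => ?_⟩
  · have h0 := h1 (r ≫ a) (by rw [Category.assoc, ha, comp_zero])
    calc a = (i ≫ r) ≫ a := by rw [hir, Category.id_comp]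
    _ = 0 := by rw [Category.assoc, h0, comp_zero]
  · obtain ⟨a, ha⟩ := h2 (r ≫ b) (by rw [Category.assoc, hb, comp_zero])
    exact ⟨i ≫ a, by rw [Category.assoc, ha, ← Category.assoc, hir, Category.id_comp]⟩
  · obtain ⟨b, hb⟩ := h3 (r ≫ c)
    exact ⟨i ≫ b, by rw [Category.assoc, hb, ← Category.assoc, hir, Category.id_comp]⟩

lemma einjective_of_isZero (E : Set (Triangle K₀)) {X : K₀} (hX : IsZero X) :
    EInjective E X := fun _ _ =>
  ⟨fun a _ => hX.eq_of_tgt a 0, fun _ _ => ⟨0, hX.eq_of_tgt _ _⟩, fun _ => ⟨0, hX.eq_of_tgt _ _⟩⟩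

lemma eprojective_of_isZero (E : Set (Triangle K₀)) {X : K₀} (hX : IsZero X) :
    EProjective E X := fun _ _ =>
  ⟨fun a _ => hX.eq_of_src a 0, fun _ _ => ⟨0, hX.eq_of_src _ _⟩, fun _ => ⟨0, hX.eq_of_src _ _⟩⟩

lemma einjective_sum [HasBinaryBiproducts K₀] (E : Set (Triangle K₀)) {X Y : K₀}
    (hX : EInjective E X) (hY : EInjective E Y) : EInjective E (X ⊞ Y) := by
  intro T hT
  obtain ⟨hX1, hX2, hX3⟩ := hX T hT
  obtain ⟨hY1, hY2, hY3⟩ := hY T hT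
  refine ⟨fun a ha => ?_, fun b hb => ?_, fun c => ?_⟩
  · apply biprod.hom_ext
    · rw [zero_comp]
      exact hX1 (a ≫ biprod.fst) (by rw [← Category.assoc, ha, zero_comp])
    · rw [zero_comp]
      exact hY1 (a ≫ biprod.snd) (by rw [← Category.assoc, ha, zero_comp])
  · obtain ⟨aX, haX⟩ := hX2 (b ≫ biprod.fst) (by rw [← Category.assoc, hb, zero_comp])
    obtain ⟨aY, haY⟩ := hY2 (b ≫ biprod.snd) (by rw [← Category.assoc, hb, zero_comp])
    refine ⟨biprod.lift aX aY, ?_⟩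
    apply biprod.hom_ext
    · rw [Category.assoc, biprod.lift_fst, haX]
    · rw [Category.assoc, biprod.lift_snd, haY]
  · obtain ⟨bX, hbX⟩ := hX3 (c ≫ biprod.fst)
    obtain ⟨bY, hbY⟩ := hY3 (c ≫ biprod.snd)
    refine ⟨biprod.lift bX bY, ?_⟩
    apply biprod.hom_ext
    · rw [Category.assoc, biprod.lift_fst, hbX]
    · rw [Category.assoc, biprod.lift_snd, hbY]

lemma eprojective_sum [HasBinaryBiproducts K₀] (E : Set (Triangle K₀)) {X Y : K₀}
    (hX : EProjective E X) (hY : EProjective E Y) : EProjective E (X ⊞ Y) := by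
  intro T hT
  obtain ⟨hX1, hX2, hX3⟩ := hX T hT
  obtain ⟨hY1, hY2, hY3⟩ := hY T hT
  refine ⟨fun a ha => ?_, fun b hb => ?_, fun c => ?_⟩
  · apply biprod.hom_ext'
    · rw [comp_zero]
      exact hX1 (biprod.inl ≫ a) (by rw [Category.assoc, ha, comp_zero])
    · rw [comp_zero]
      exact hY1 (biprod.inr ≫ a) (by rw [Category.assoc, ha, comp_zero])
  · obtain ⟨aX, haX⟩ := hX2 (biprod.inl ≫ b) (by rw [Category.assoc, hb, comp_zero])
    obtain ⟨aY, haY⟩ := hY2 (biprod.inr ≫ b) (by rw [Category.assoc, hb, comp_zero])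
    refine ⟨biprod.desc aX aY, ?_⟩
    apply biprod.hom_ext'
    · rw [← Category.assoc, biprod.inl_desc, haX]
    · rw [← Category.assoc, biprod.inr_desc, haY]
  · obtain ⟨bX, hbX⟩ := hX3 (biprod.inl ≫ c)
    obtain ⟨bY, hbY⟩ := hY3 (biprod.inr ≫ c)
    refine ⟨biprod.desc bX bY, ?_⟩
    apply biprod.hom_ext'
    · rw [← Category.assoc, biprod.inl_desc, hbX]
    · rw [← Category.assoc, biprod.inr_desc, hbY]

lemma einjective_of_addClosure [HasBinaryBiproducts K₀] (E : Set (Triangle K₀)) {A : Set K₀}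
    (hA : ∀ Z ∈ A, EInjective E Z) {X : K₀} (hX : AddClosure A X) : EInjective E X := by
  induction hX with
  | of Z hZ => exact hA Z hZ
  | zero Z hZ => exact einjective_of_isZero E hZ
  | sum X' Y' hX' hY' ihX ihY => exact einjective_sum E ihX ihY
  | summand X' Y' Z hZ e ih =>
      exact einjective_of_retract E ih (biprod.inl ≫ e.hom) (e.inv ≫ biprod.fst) (by simp)
  | isoClosed X' Y' hX' e ih =>
      exact einjective_of_retract E ih e.inv e.hom e.inv_hom_id

lemma eprojective_of_addClosure [HasBinaryBiproducts K₀] (E : Set (Triangle K₀)) {A : Set K₀}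
    (hA : ∀ Z ∈ A, EProjective E Z) {X : K₀} (hX : AddClosure A X) : EProjective E X := by
  induction hX with
  | of Z hZ => exact hA Z hZ
  | zero Z hZ => exact eprojective_of_isZero E hZ
  | sum X' Y' hX' hY' ihX ihY => exact eprojective_sum E ihX ihY
  | summand X' Y' Z hZ e ih =>
      exact eprojective_of_retract E ih (biprod.inl ≫ e.hom) (e.inv ≫ biprod.fst) (by simp)
  | isoClosed X' Y' hX' e ih =>
      exact eprojective_of_retract E ih e.inv e.hom e.inv_hom_id

end Aux

/-- Lemma 3.13: adjoints produce enough `F`-injectives and `F`-projectives for the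
proper class of `F`-split triangles. -/
theorem statement2 {K : Type u} [Category.{v} K] [Preadditive K] [HasZeroObject K]
    [HasShift K ℤ] [∀ n : ℤ, (shiftFunctor K n).Additive] [Pretriangulated K]
    [HasBinaryBiproducts K] {L : Type u'} [Category.{v'} L] [Preadditive L] [HasZeroObject L]
    [HasShift L ℤ] [∀ n : ℤ, (shiftFunctor L n).Additive] [Pretriangulated L]
    (F : K ⥤ L) (hFadd : F.Additive) (hc : F.CommShift ℤ)
    (hFexact : ∀ T ∈ (distTriang K), mapTri F hc T ∈ (distTriang L)) :
    -- (a)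
    (∀ (U : L ⥤ K) (adj : F ⊣ U),
      (∀ Lo : L, EInjective (splitClass F) (U.obj Lo)) ∧
      (∀ X : K, SMono (splitClass F) (adj.unit.app X)) ∧
      EnoughInjectives (splitClass F) ∧
      (∀ X : K, EInjective (splitClass F) X ↔ AddClosure (Set.range U.obj) X)) ∧
    -- (b)
    (∀ (V : L ⥤ K) (adj : V ⊣ F),
      (∀ Lo : L, EProjective (splitClass F) (V.obj Lo)) ∧
      (∀ X : K, SEpi (splitClass F) (adj.counit.app X)) ∧
      EnoughProjectives (splitClass F) ∧
      (∀ X : K, EProjective (splitClass F) X ↔ AddClosure (Set.range V.obj) X)) := by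
  haveI : F.Additive := hFadd
  have hmap : ∀ T ∈ splitClass F, mapTri F hc T ∈ (distTriang L) ∧ (mapTri F hc T).mor₃ = 0 := by
    intro T hT
    refine ⟨hFexact T hT.1, ?_⟩
    dsimp [mapTri]
    rw [hT.2, zero_comp]; rfl
  constructor
  · -- (a) right adjoint
    intro U adj
    have hsymm0 : ∀ (X : K) (Lo : L), (adj.homEquiv X Lo).symm 0 = 0 := fun X Lo => by
      rw [Adjunction.homEquiv_counit, Functor.map_zero, zero_comp]
    have hinj : ∀ Lo : L, EInjective (splitClass F) (U.obj Lo) := by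
      intro Lo T hT
      obtain ⟨hT', h3'⟩ := hmap T hT
      refine ⟨fun a ha => ?_, fun b hb => ?_, fun c => ?_⟩
      · haveI : Epi (F.map T.mor₂) := Triangle.epi₂ _ hT' h3'
        have h0 : F.map T.mor₂ ≫ (adj.homEquiv _ _).symm a = 0 := by
          rw [← Adjunction.homEquiv_naturality_left_symm, ha, hsymm0]
        have h1 : (adj.homEquiv _ _).symm a = 0 := by
          rw [← cancel_epi (F.map T.mor₂), h0, comp_zero]
        exact (adj.homEquiv _ _).symm.injective (h1.trans (hsymm0 _ _).symm)
      · have h0 : F.map T.mor₁ ≫ (adj.homEquiv _ _).symm b = 0 := by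
          rw [← Adjunction.homEquiv_naturality_left_symm, hb, hsymm0]
        obtain ⟨g, hg⟩ := Triangle.yoneda_exact₂ _ hT' ((adj.homEquiv _ _).symm b) h0
        dsimp [mapTri] at hg
        refine ⟨(adj.homEquiv _ _) g, ?_⟩
        erw [← Adjunction.homEquiv_naturality_left, ← hg, Equiv.apply_symm_apply]
      · obtain ⟨e, he₁, he₂⟩ := exists_iso_binaryBiproduct_of_distTriang _ hT' h3'
        dsimp [mapTri] at he₁
        have hr : F.map T.mor₁ ≫ (e.hom ≫ biprod.fst) = 𝟙 _ := by
          erw [← Category.assoc, he₁]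
          exact biprod.inl_fst
        refine ⟨(adj.homEquiv _ _) ((e.hom ≫ biprod.fst) ≫ (adj.homEquiv _ _).symm c), ?_⟩
        erw [← Adjunction.homEquiv_naturality_left, ← Category.assoc, hr, Category.id_comp,
          Equiv.apply_symm_apply]
    have hmono : ∀ X : K, SMono (splitClass F) (adj.unit.app X) := by
      intro X
      obtain ⟨Z, g, h, mem⟩ := Pretriangulated.distinguished_cocone_triangle (adj.unit.app X)
      refine ⟨Z, g, h, mem, ?_⟩
      have hT' := hFexact _ mem
      haveI : IsSplitMono (F.map (adj.unit.app X)) :=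
        IsSplitMono.mk' ⟨adj.counit.app (F.obj X), adj.left_triangle_components X⟩
      have h3 : (mapTri F hc (Triangle.mk (adj.unit.app X) g h)).mor₃ = 0 :=
        Triangle.mor₃_eq_zero_of_mono₁ _ hT' (show Mono (F.map (adj.unit.app X)) from inferInstance)
      dsimp [mapTri] at h3
      exact (Preadditive.IsIso.comp_right_eq_zero _ _).1 h3
    refine ⟨hinj, hmono, fun X => ⟨U.obj (F.obj X), adj.unit.app X, hinj _, hmono X⟩,
      fun X => ⟨?_, ?_⟩⟩
    · intro hX
      obtain ⟨Z, g, h, hmem⟩ := hmono X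
      obtain ⟨r, hr⟩ := (hX _ hmem).2.2 (𝟙 X)
      haveI : IsSplitMono (adj.unit.app X) := IsSplitMono.mk' ⟨r, hr⟩
      have h3 : (Triangle.mk (adj.unit.app X) g h).mor₃ = 0 :=
        Triangle.mor₃_eq_zero_of_mono₁ _ hmem.1 (show Mono (adj.unit.app X) from inferInstance)
      obtain ⟨e, he₁, he₂⟩ := exists_iso_binaryBiproduct_of_distTriang _ hmem.1 h3
      exact AddClosure.summand X Z _ (AddClosure.of _ ⟨F.obj X, rfl⟩) e.symm
    · intro hX
      exact einjective_of_addClosure _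
        (fun Z hZ => by obtain ⟨Lo, rfl⟩ := hZ; exact hinj Lo) hX
  · -- (b) left adjoint
    intro V adj
    have hEq0 : ∀ (Lo : L) (X : K), (adj.homEquiv Lo X) 0 = 0 := fun Lo X => by
      rw [Adjunction.homEquiv_unit, Functor.map_zero, comp_zero]
    have hproj : ∀ Lo : L, EProjective (splitClass F) (V.obj Lo) := by
      intro Lo T hT
      obtain ⟨hT', h3'⟩ := hmap T hT
      refine ⟨fun a ha => ?_, fun b hb => ?_, fun c => ?_⟩
      · haveI : Mono (F.map T.mor₁) := Triangle.mono₁ _ hT' h3'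
        have h0 : (adj.homEquiv _ _) a ≫ F.map T.mor₁ = 0 := by
          rw [← Adjunction.homEquiv_naturality_right, ha, hEq0]
        have h1 : (adj.homEquiv _ _) a = 0 := by
          rw [← cancel_mono (F.map T.mor₁), h0, zero_comp]
        exact (adj.homEquiv _ _).injective (h1.trans (hEq0 _ _).symm)
      · have h0 : (adj.homEquiv _ _) b ≫ F.map T.mor₂ = 0 := by
          rw [← Adjunction.homEquiv_naturality_right, hb, hEq0]
        obtain ⟨g, hg⟩ := Triangle.coyoneda_exact₂ _ hT' ((adj.homEquiv _ _) b) h0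
        dsimp [mapTri] at hg
        refine ⟨(adj.homEquiv _ _).symm g, ?_⟩
        erw [← Adjunction.homEquiv_naturality_right_symm, ← hg, Equiv.symm_apply_apply]
      · have h0 : (adj.homEquiv _ _) c ≫ (mapTri F hc T).mor₃ = 0 := by
          rw [h3']; exact comp_zero
        obtain ⟨g, hg⟩ := Triangle.coyoneda_exact₃ _ hT' ((adj.homEquiv _ _) c) h0
        dsimp [mapTri] at hg
        refine ⟨(adj.homEquiv _ _).symm g, ?_⟩
        erw [← Adjunction.homEquiv_naturality_right_symm, ← hg, Equiv.symm_apply_apply]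
    have hepi : ∀ X : K, SEpi (splitClass F) (adj.counit.app X) := by
      intro X
      obtain ⟨Z, g, h, mem⟩ := Pretriangulated.distinguished_cocone_triangle (adj.counit.app X)
      have hT' := hFexact _ mem
      haveI : IsSplitEpi (F.map (adj.counit.app X)) :=
        IsSplitEpi.mk' ⟨adj.unit.app (F.obj X), adj.right_triangle_components X⟩
      have hg0 : F.map g = 0 := by
        have h2 : (mapTri F hc (Triangle.mk (adj.counit.app X) g h)).mor₂ = 0 :=
          Triangle.mor₂_eq_zero_of_epi₁ _ hT' (show Epi (F.map (adj.counit.app X)) from inferInstance)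
        dsimp [mapTri] at h2
        exact h2
      exact ⟨_, (Triangle.mk (adj.counit.app X) g h).invRotate.mor₁,
        (Triangle.mk (adj.counit.app X) g h).invRotate.mor₃,
        Pretriangulated.inv_rot_of_distTriang _ mem,
        by show F.map (g ≫ _) = 0; erw [Functor.map_comp, hg0, zero_comp]⟩
    refine ⟨hproj, hepi, fun X => ⟨V.obj (F.obj X), adj.counit.app X, hproj _, hepi X⟩,
      fun X => ⟨?_, ?_⟩⟩
    · intro hX
      obtain ⟨A, f, h, hmem⟩ := hepi X
      obtain ⟨s, hs⟩ := (hX _ hmem).2.2 (𝟙 X)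
      obtain ⟨Z, g, h', mem'⟩ := Pretriangulated.distinguished_cocone_triangle s
      haveI : IsSplitMono s := IsSplitMono.mk' ⟨adj.counit.app X, hs⟩
      have h3 : (Triangle.mk s g h').mor₃ = 0 :=
        Triangle.mor₃_eq_zero_of_mono₁ _ mem' (show Mono s from inferInstance)
      obtain ⟨e, he₁, he₂⟩ := exists_iso_binaryBiproduct_of_distTriang _ mem' h3
      exact AddClosure.summand X Z _ (AddClosure.of _ ⟨F.obj X, rfl⟩) e.symm
    · intro hX
      exact eprojective_of_addClosure _
        (fun Z hZ => by obtain ⟨Lo, rfl⟩ := hZ; exact hproj Lo) hX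

end RelStable
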